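/- Every one-dimensional array language in L_*(1-ARBA) is generated by a one-dimensional array grammar all of whose rules are of the following two forms (Chomsky-like normal form): A → B with A ∈ N and B ∈ N ∪ T ∪ {#} (rewriting a single nonterminal at one position), and A v D → B v C with v ∈ {(1), (−1)}, A, B, C ∈ N ∪ T, D ∈ N ∪ T ∪ {#} (a rule of norm 1 rewriting the symbols at two adjacent positions). -/

import Mathlib

namespace AID

/-! ### One-dimensional arrays over ℕ (with `none` as the blank symbol `#`) -/

/-- A one-dimensional array: a map from ℤ to symbols (`none` = blank `#`). -/
abbrev Arr := ℤ → Option ℕ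

/-- The shape of the array (set of non-blank positions) is finite. -/
def FinShape (A : Arr) : Prop := {v : ℤ | A v ≠ none}.Finite

/-- Equivalence of arrays up to translation. -/
def EquivT (A B : Arr) : Prop := ∃ v : ℤ, ∀ w : ℤ, A w = B (w - v)

/-- The set of symbols occurring in an array. -/
def symbolsOf (A : ℤ → Option ℕ) : Set ℕ := {s | ∃ v, A v = some s}

/-- All symbols of the array belong to the alphabet `T`. -/
def overAlph (T : Finset ℕ) (A : Arr) : Prop := ∀ s ∈ symbolsOf A, s ∈ T

/-- The array corresponding to a string `w`, placing `w` on positions `0, …, |w|-1`. -/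
def strToArr (w : List ℕ) : Arr := fun z => if 0 ≤ z then w[z.toNat]? else none

/-! ### Arbitrary array rewriting rules and 1-ARBA grammars -/

/-- An arbitrary (one-dimensional) array rewriting rule `(W, 𝒜₁, 𝒜₂)`:
only the values of `A1`, `A2` on `W` matter. -/
structure ArrRule where
  W : Finset ℤ
  A1 : ℤ → Option ℕ
  A2 : ℤ → Option ℕ

/-- Application of an array rule at translation `v`: the pattern `A1` occurs at `τ_v W`
in `C1`; it gets replaced by `A2`, everything else is unchanged. -/
def ArrRule.applyAt (p : ArrRule) (v : ℤ) (C1 C2 : Arr) : Prop :=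
  (∀ w : ℤ, w - v ∉ p.W → C1 w = C2 w) ∧
  ∀ w ∈ p.W, C1 (v + w) = p.A1 w ∧ C2 (v + w) = p.A2 w

def ArrRule.applies (p : ArrRule) (C1 C2 : Arr) : Prop := ∃ v, p.applyAt v C1 C2

/-- A one-dimensional array grammar of type 1-ARBA. -/
structure Grammar where
  N : Finset ℕ
  T : Finset ℕ
  disj : Disjoint N T
  ax : Arr
  axFin : FinShape ax
  axAlph : ∀ s ∈ symbolsOf ax, s ∈ N ∪ T
  P : List ArrRule
  PAlph : ∀ p ∈ P, (∀ s ∈ symbolsOf p.A1, s ∈ N ∪ T) ∧ ∀ s ∈ symbolsOf p.A2, s ∈ N ∪ T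

def Grammar.step (G : Grammar) (A B : Arr) : Prop := ∃ p ∈ G.P, p.applies A B

def Grammar.derives (G : Grammar) : Arr → Arr → Prop := Relation.ReflTransGen G.step

/-- `L_*(G)`: all terminal arrays derivable from the axiom, up to translation. -/
def Grammar.Lstar (G : Grammar) : Set Arr :=
  {B | ∃ A, G.derives G.ax A ∧ overAlph G.T A ∧ EquivT B A}

/-! ### Array insertion (contextual) and deletion rules -/

/-- A pair `((W₁,𝒜₁),(W₂,𝒜₂))` of a selector and a context, used both for
array insertion (contextual) rules and array deletion rules. -/
structure CtxPair where
  W1 : Finset ℤ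
  W2 : Finset ℤ
  disj : Disjoint W1 W2
  A1 : ℤ → Option ℕ
  A2 : ℤ → Option ℕ

/-- The norm of the rule: the maximal distance of two positions in `W₁ ∪ W₂`. -/
def CtxPair.NormLE (r : CtxPair) (k : ℕ) : Prop :=
  ∀ v ∈ r.W1 ∪ r.W2, ∀ w ∈ r.W1 ∪ r.W2, (v - w).natAbs ≤ k

/-- An array insertion or array deletion rule. -/
inductive IDRule where
  | ins : CtxPair → IDRule
  | del : CtxPair → IDRule

/-- The array rewriting rule corresponding to an insertion/deletion rule:
`I((W₁,𝒜₁),(W₂,𝒜₂))` acts as `(W₁ ∪ W₂, 𝒜₁, 𝒜₁ ∪ 𝒜₂)` (the positions of `W₂`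
must be blank), and `D((W₁,𝒜₁),(W₂,𝒜₂))` acts as `𝒜₁ ∪ 𝒜₂ → 𝒜₁`. -/
def IDRule.toArrRule : IDRule → ArrRule
  | .ins r => ⟨r.W1 ∪ r.W2, fun w => if w ∈ r.W1 then r.A1 w else none,
               fun w => if w ∈ r.W1 then r.A1 w else r.A2 w⟩
  | .del r => ⟨r.W1 ∪ r.W2, fun w => if w ∈ r.W1 then r.A1 w else r.A2 w,
               fun w => if w ∈ r.W1 then r.A1 w else none⟩

def IDRule.applies (r : IDRule) (C1 C2 : Arr) : Prop := r.toArrRule.applies C1 C2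

def IDRule.IsIns : IDRule → Prop
  | .ins _ => True
  | .del _ => False

/-- Norm bounds: deletion rules of norm at most `kd`, insertion rules of norm at most `ki`. -/
def IDRule.NormLE : IDRule → ℕ → ℕ → Prop
  | .ins r, _, ki => r.NormLE ki
  | .del r, kd, _ => r.NormLE kd

/-! ### Membrane structures and sequential P systems -/

/-- A membrane (tree) structure: membranes `0, …, size-1`, a parent map and a root. -/
structure MemStruct where
  size : ℕ
  pos : 0 < size
  parent : Fin size → Fin size
  root : Fin size
  parent_root : parent root = root
  reach : ∀ m, ∃ j, parent^[j] m = root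

/-- The tree has height at most `n`. -/
def MemStruct.HeightLE (μ : MemStruct) (n : ℕ) : Prop := ∀ m, μ.parent^[n] m = μ.root

/-- Target indicators for P system rules. -/
inductive Tar (n : ℕ) where
  | here : Tar n
  | out : Tar n
  | inAny : Tar n
  | inLab : Fin n → Tar n

/-- A target is simple if it is one of `here`, `out`, `in`. -/
def Tar.IsSimple {n : ℕ} : Tar n → Prop
  | .inLab _ => False
  | _ => True

/-- Semantics of moving from membrane `h` according to a target. -/
def MemStruct.move (μ : MemStruct) (h : Fin μ.size) : Tar μ.size → Fin μ.size → Prop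
  | .here, h' => h' = h
  | .out, h' => h ≠ μ.root ∧ h' = μ.parent h
  | .inAny, h' => μ.parent h' = h ∧ h' ≠ h
  | .inLab m, h' => h' = m ∧ μ.parent m = h ∧ m ≠ h

/-- A sequential P system working on single objects of type `Obj` with rules
of type `Rule`: each rule is assigned to a membrane and has a target. -/
structure PSys (Obj Rule : Type) where
  mem : MemStruct
  ax : Obj
  i0 : Fin mem.size
  rules : List (Fin mem.size × Rule × Tar mem.size)

variable {Obj Rule : Type}

/-- One computation step on configurations (object, membrane). -/
def PSys.step (app : Rule → Obj → Obj → Prop) (S : PSys Obj Rule)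
    (c c' : Obj × Fin S.mem.size) : Prop :=
  ∃ r ∈ S.rules, r.1 = c.2 ∧ app r.2.1 c.1 c'.1 ∧ S.mem.move c.2 r.2.2 c'.2

/-- Results of halting computations starting from the axiom in membrane `i0`. -/
def PSys.results (app : Rule → Obj → Obj → Prop) (S : PSys Obj Rule) : Set Obj :=
  {w | ∃ c : Obj × Fin S.mem.size, Relation.ReflTransGen (S.step app) (S.ax, S.i0) c ∧
        (¬ ∃ c', S.step app c c') ∧ w = c.1}

/-- A P system is simple if only the targets `here`, `in`, `out` occur. -/
def PSys.IsSimple (S : PSys Obj Rule) : Prop := ∀ r ∈ S.rules, r.2.2.IsSimple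

/-! ### Array insertion/deletion P systems -/

/-- A sequential P system whose rules are one-dimensional array insertion and
deletion rules, with terminal alphabet `T`. -/
structure ArrPSys where
  T : Finset ℕ
  sys : PSys Arr IDRule
  axFin : FinShape sys.ax

def ArrPSys.Lt (S : ArrPSys) : Set Arr :=
  {B | ∃ A ∈ S.sys.results IDRule.applies, overAlph S.T A ∧ EquivT B A}

def ArrPSys.IsSimple (S : ArrPSys) : Prop := S.sys.IsSimple

def ArrPSys.HeightLE (S : ArrPSys) (n : ℕ) : Prop := S.sys.mem.HeightLE n

/-- All deletion rules have norm at most `kd` and all insertion rules norm at most `ki`. -/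
def ArrPSys.NormLE (S : ArrPSys) (kd ki : ℕ) : Prop :=
  ∀ r ∈ S.sys.rules, IDRule.NormLE r.2.1 kd ki


/-- An array rule is in Chomsky-like normal form w.r.t. a grammar `G`: either it is of
the form `A → B` with `A ∈ N`, `B ∈ N ∪ T ∪ {#}` (rewriting a single nonterminal at one
position), or of the form `A v D → B v C` with `v ∈ {1, -1}`, `A, B, C ∈ N ∪ T`,
`D ∈ N ∪ T ∪ {#}` (a rule of norm 1 rewriting the symbols at two adjacent positions). -/
def NormalFormRule (G : Grammar) (p : ArrRule) : Prop :=
  (p.W = {0} ∧ (∃ A ∈ G.N, p.A1 0 = some A) ∧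
    (p.A2 0 = none ∨ ∃ B ∈ G.N ∪ G.T, p.A2 0 = some B)) ∨
  (∃ v : ℤ, (v = 1 ∨ v = -1) ∧ p.W = {0, v} ∧
    (∃ A ∈ G.N ∪ G.T, p.A1 0 = some A) ∧
    (∃ B ∈ G.N ∪ G.T, p.A2 0 = some B) ∧
    (∃ C ∈ G.N ∪ G.T, p.A2 v = some C) ∧
    (p.A1 v = none ∨ ∃ D ∈ G.N ∪ G.T, p.A1 v = some D))


/-! ### Construction: Chomsky-like normal form via a traveling head -/

section CNF

variable (G : Grammar)

/-- A bound strictly above all symbols of `G`. -/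
def MG : ℕ := (G.N ∪ G.T).sup id + 1

lemma lt_MG {s : ℕ} (h : s ∈ G.N ∪ G.T) : s < MG G :=
  Nat.lt_succ_of_le (Finset.le_sup (f := id) h)

lemma not_T_of_MG_le {s : ℕ} (h : MG G ≤ s) : s ∉ G.T := by
  intro hT
  exact absurd (lt_MG G (Finset.mem_union_right _ hT)) (not_lt.mpr h)

/-- Admissible carried values: blank or a symbol of `G`. -/
def OkB (b : Option ℕ) : Prop := b = none ∨ ∃ s ∈ G.N ∪ G.T, b = some s

def carryCode : Option ℕ → ℕ
  | none => 0
  | some s => s + 1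

lemma carryCode_le {b : Option ℕ} (hb : OkB G b) : carryCode b ≤ MG G := by
  rcases hb with h | ⟨s, hs, h⟩ <;> subst h
  · exact Nat.zero_le _
  · exact lt_MG G hs

lemma carryCode_inj {b b' : Option ℕ} (h : carryCode b = carryCode b') : b = b' := by
  cases b <;> cases b' <;> simp [carryCode] at h ⊢ <;> omega

/-- Head symbol with state index `k` carrying `b`. -/
def hcode (k : ℕ) (b : Option ℕ) : ℕ := MG G + 1 + (MG G + 1) * k + carryCode b

lemma MG_lt_hcode (k : ℕ) (b : Option ℕ) : MG G < hcode G k b := by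
  unfold hcode; omega

lemma hcode_inj {k k' : ℕ} {b b' : Option ℕ} (hb : OkB G b) (hb' : OkB G b')
    (h : hcode G k b = hcode G k' b') : k = k' ∧ b = b' := by
  have h1 := carryCode_le G hb
  have h2 := carryCode_le G hb'
  unfold hcode at h
  have hk : k = k' := by
    by_contra hne
    rcases Nat.lt_or_ge k k' with hlt | hge
    · nlinarith [Nat.succ_le_of_lt hlt]
    · have : k' < k := lt_of_le_of_ne hge (Ne.symm hne)
      nlinarith [Nat.succ_le_of_lt this]
  subst hk
  exact ⟨rfl, carryCode_inj (by omega)⟩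

/-- Decoding a cell value. -/
def decC (a : Option ℕ) : Option ℕ :=
  match a with
  | none => none
  | some s =>
    if s < MG G then some s
    else if s = MG G then none
    else match (s - (MG G + 1)) % (MG G + 1) with
      | 0 => none
      | c + 1 => some c

lemma decC_id {b : Option ℕ} (hb : OkB G b) : decC G b = b := by
  rcases hb with h | ⟨s, hs, h⟩ <;> subst h
  · rfl
  · simp [decC, lt_MG G hs]

lemma decC_box : decC G (some (MG G)) = none := by simp [decC]

lemma decC_hcode {b : Option ℕ} (hb : OkB G b) (k : ℕ) :
    decC G (some (hcode G k b)) = b := by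
  have h1 : carryCode b ≤ MG G := carryCode_le G hb
  have h2 : ¬ hcode G k b < MG G := by have := MG_lt_hcode G k b; omega
  have h3 : ¬ hcode G k b = MG G := by have := MG_lt_hcode G k b; omega
  have h4 : hcode G k b - (MG G + 1) = (MG G + 1) * k + carryCode b := by
    unfold hcode; omega
  have h5 : ((MG G + 1) * k + carryCode b) % (MG G + 1) = carryCode b := by
    rw [Nat.mul_add_mod]
    exact Nat.mod_eq_of_lt (by omega)
  have : decC G (some (hcode G k b)) =
      (match (hcode G k b - (MG G + 1)) % (MG G + 1) with
        | 0 => none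
        | c + 1 => some c : Option ℕ) := by
    simp only [decC, h2, h3, if_false]
  rw [this, h4, h5]
  cases b with
  | none => rfl
  | some s => rfl


/-! #### Indexed access to the rules of `G` -/

def dfltRule : ArrRule := ⟨∅, fun _ => none, fun _ => none⟩

def pR (i : ℕ) : ArrRule := G.P.getD i (dfltRule)

def WI (i : ℕ) : Finset ℤ := (pR G i).W

def loI (i : ℕ) : ℤ := if h : (WI G i).Nonempty then (WI G i).min' h else 0
def hiI (i : ℕ) : ℤ := if h : (WI G i).Nonempty then (WI G i).max' h else 0

lemma pR_mem {i : ℕ} (h : i < G.P.length) : pR G i ∈ G.P := by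
  rw [pR, List.getD_eq_getElem _ _ h]; exact List.getElem_mem h

lemma loI_le {i : ℕ} {w : ℤ} (hw : w ∈ WI G i) : loI G i ≤ w := by
  have hne : (WI G i).Nonempty := ⟨w, hw⟩
  rw [loI, dif_pos hne]; exact Finset.min'_le _ _ hw

lemma le_hiI {i : ℕ} {w : ℤ} (hw : w ∈ WI G i) : w ≤ hiI G i := by
  have hne : (WI G i).Nonempty := ⟨w, hw⟩
  rw [hiI, dif_pos hne]; exact Finset.le_max' _ _ hw

lemma loI_le_hiI {i : ℕ} (h : (WI G i).Nonempty) : loI G i ≤ hiI G i := by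
  obtain ⟨w, hw⟩ := h
  exact le_trans (loI_le G hw) (le_hiI G hw)

/-! #### Head state codes -/

def idleCode (b : Option ℕ) : ℕ := hcode G 0 b

def workK (i : ℕ) (o : ℤ) : ℕ := 1 + Nat.pair i (o - loI G i).toNat

def workCode (i : ℕ) (o : ℤ) (b : Option ℕ) : ℕ := hcode G (workK G i o) b

lemma workK_inj {i i' : ℕ} {o o' : ℤ} (hi : loI G i ≤ o) (hi' : loI G i' ≤ o')
    (h : workK G i o = workK G i' o') : i = i' ∧ o = o' := by
  unfold workK at h
  have hp : Nat.pair i (o - loI G i).toNat = Nat.pair i' (o' - loI G i').toNat := by omega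
  have h2 := Nat.pair_eq_pair.mp hp
  obtain ⟨rfl, h4⟩ := h2
  refine ⟨rfl, ?_⟩
  have e1 := Int.toNat_of_nonneg (by omega : (0:ℤ) ≤ o - loI G i)
  have e2 := Int.toNat_of_nonneg (by omega : (0:ℤ) ≤ o' - loI G i)
  omega

lemma idle_ne_work {b b' : Option ℕ} (hb : OkB G b) (hb' : OkB G b') {i : ℕ} {o : ℤ} :
    idleCode G b ≠ workCode G i o b' := by
  intro h
  have := (hcode_inj G hb hb' h).1
  unfold workK at this; omega

/-- What the head leaves behind when departing a cell carrying `b`: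
the symbol itself, or the blank-placeholder `□ = MG G`. -/
def repB (b : Option ℕ) : ℕ := b.getD (MG G)

lemma decC_repB {b : Option ℕ} (hb : OkB G b) : decC G (some (repB G b)) = b := by
  rcases hb with h | ⟨s, hs, h⟩ <;> subst h
  · simp [repB, decC]
  · simp [repB, decC, lt_MG G hs]

lemma repB_le {b : Option ℕ} (hb : OkB G b) : repB G b ≤ MG G := by
  rcases hb with h | ⟨s, hs, h⟩ <;> subst h
  · simp [repB]
  · simpa [repB] using le_of_lt (lt_MG G hs)

/-! #### The normal-form rules -/

def eraseRule : ArrRule :=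
  ⟨{0}, fun z => if z = 0 then some (MG G) else none, fun _ => none⟩

def exitRule (b : Option ℕ) : ArrRule :=
  ⟨{0}, fun z => if z = 0 then some (idleCode G b) else none,
        fun z => if z = 0 then b else none⟩

def entryRule (i : ℕ) (b : Option ℕ) : ArrRule :=
  ⟨{0}, fun z => if z = 0 then some (idleCode G b) else none,
        fun z => if z = 0 then some (workCode G i (loI G i) b) else none⟩

def moveRule (v : ℤ) (b d : Option ℕ) : ArrRule :=
  ⟨{0, v}, fun z => if z = 0 then some (idleCode G b) else if z = v then d else none,
           fun z => if z = 0 then some (repB G b)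
                    else if z = v then some (idleCode G (decC G d)) else none⟩

def workRule (i : ℕ) (o : ℤ) (b d : Option ℕ) : ArrRule :=
  ⟨{0, 1}, fun z => if z = 0 then some (workCode G i o b) else if z = 1 then d else none,
           fun z => if z = 0 then some (repB G (if o ∈ WI G i then (pR G i).A2 o else b))
                    else if z = 1 then
                      some (if o + 1 ≤ hiI G i then workCode G i (o + 1) (decC G d)
                            else idleCode G (decC G d)) else none⟩

/-! #### The list of rules -/

noncomputable def bsL : List (Option ℕ) := none :: (G.N ∪ G.T).toList.map some

def OkD (d : Option ℕ) : Prop := d = some (MG G) ∨ OkB G d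

noncomputable def dsL : List (Option ℕ) := some (MG G) :: bsL G

lemma mem_bsL {b : Option ℕ} : b ∈ bsL G ↔ OkB G b := by
  simp [bsL, OkB, Finset.mem_toList, eq_comm]

lemma mem_dsL {d : Option ℕ} : d ∈ dsL G ↔ OkD G d := by
  simp [dsL, mem_bsL, OkD, or_comm]

lemma OkB_decC_of_OkD {d : Option ℕ} (hd : OkD G d) : OkB G (decC G d) := by
  rcases hd with h | h
  · subst h; rw [decC_box]; exact Or.inl rfl
  · rw [decC_id G h]; exact h

def ruleIdx : List ℕ := (List.range G.P.length).filter (fun i => decide (WI G i).Nonempty)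

lemma mem_ruleIdx {i : ℕ} : i ∈ ruleIdx G ↔ i < G.P.length ∧ (WI G i).Nonempty := by
  simp [ruleIdx]

def offsL (i : ℕ) : List ℤ :=
  (List.range (hiI G i - loI G i + 1).toNat).map (fun n : ℕ => loI G i + (n : ℤ))

lemma mem_offsL {i : ℕ} {o : ℤ} (hne : (WI G i).Nonempty) :
    o ∈ offsL G i ↔ loI G i ≤ o ∧ o ≤ hiI G i := by
  have hlh := loI_le_hiI G hne
  unfold offsL
  rw [List.mem_map]
  constructor
  · rintro ⟨n, hn, rfl⟩
    rw [List.mem_range] at hn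
    have := Int.lt_toNat.mp hn
    omega
  · rintro ⟨h1, h2⟩
    refine ⟨(o - loI G i).toNat, List.mem_range.mpr ?_, ?_⟩
    · rw [Int.lt_toNat, Int.toNat_of_nonneg (by omega)]; omega
    · rw [Int.toNat_of_nonneg (by omega)]; omega

noncomputable def bsForL (i : ℕ) (o : ℤ) : List (Option ℕ) :=
  (bsL G).filter (fun b => decide (o ∈ WI G i → b = (pR G i).A1 o))

lemma mem_bsForL {i : ℕ} {o : ℤ} {b : Option ℕ} :
    b ∈ bsForL G i o ↔ OkB G b ∧ (o ∈ WI G i → b = (pR G i).A1 o) := by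
  simp only [bsForL, List.mem_filter, mem_bsL, decide_eq_true_eq]

noncomputable def PL : List ArrRule :=
  eraseRule G ::
  ((bsL G).map (exitRule G) ++
   (((ruleIdx G).flatMap fun i => (bsL G).map (entryRule G i)) ++
    (((bsL G).flatMap fun b => (dsL G).map (moveRule G 1 b)) ++
     (((bsL G).flatMap fun b => (dsL G).map (moveRule G (-1) b)) ++
      ((ruleIdx G).flatMap fun i => (offsL G i).flatMap fun o =>
        (bsForL G i o).flatMap fun b => (dsL G).map (workRule G i o b))))))

lemma mem_PL {r : ArrRule} : r ∈ PL G ↔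
    r = eraseRule G ∨
    (∃ b, OkB G b ∧ r = exitRule G b) ∨
    (∃ i b, (i < G.P.length ∧ (WI G i).Nonempty) ∧ OkB G b ∧ r = entryRule G i b) ∨
    (∃ v b d, (v = 1 ∨ v = -1) ∧ OkB G b ∧ OkD G d ∧ r = moveRule G v b d) ∨
    (∃ i o b d, (i < G.P.length ∧ (WI G i).Nonempty) ∧
      (loI G i ≤ o ∧ o ≤ hiI G i) ∧
      (OkB G b ∧ (o ∈ WI G i → b = (pR G i).A1 o)) ∧ OkD G d ∧
      r = workRule G i o b d) := by
  simp only [PL, List.mem_cons, List.mem_append, List.mem_map, List.mem_flatMap,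
    mem_bsL, mem_dsL, mem_ruleIdx, mem_bsForL]
  constructor
  · rintro (h | ⟨⟨b, hb, h⟩ | ⟨i, hi, b, hb, h⟩ | ⟨b, hb, d, hd, h⟩ | ⟨b, hb, d, hd, h⟩ | h⟩)
    · exact Or.inl h
    · exact Or.inr (Or.inl ⟨b, hb, h.symm⟩)
    · exact Or.inr (Or.inr (Or.inl ⟨i, b, hi, hb, h.symm⟩))
    · exact Or.inr (Or.inr (Or.inr (Or.inl ⟨1, b, d, Or.inl rfl, hb, hd, h.symm⟩)))
    · exact Or.inr (Or.inr (Or.inr (Or.inl ⟨-1, b, d, Or.inr rfl, hb, hd, h.symm⟩)))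
    · obtain ⟨i, hi, o, ho, b, hb, d, hd, h⟩ := h
      exact Or.inr (Or.inr (Or.inr (Or.inr ⟨i, o, b, d, hi,
        (mem_offsL G hi.2).mp ho, hb, hd, h.symm⟩)))
  · rintro (h | ⟨b, hb, h⟩ | ⟨i, b, hi, hb, h⟩ | ⟨v, b, d, hv, hb, hd, h⟩ |
      ⟨i, o, b, d, hi, ho, hb, hd, h⟩)
    · exact Or.inl h
    · exact Or.inr (Or.inl ⟨b, hb, h.symm⟩)
    · exact Or.inr (Or.inr (Or.inl ⟨i, hi, b, hb, h.symm⟩))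
    · rcases hv with rfl | rfl
      · exact Or.inr (Or.inr (Or.inr (Or.inl ⟨b, hb, d, hd, h.symm⟩)))
      · exact Or.inr (Or.inr (Or.inr (Or.inr (Or.inl ⟨b, hb, d, hd, h.symm⟩))))
    · exact Or.inr (Or.inr (Or.inr (Or.inr (Or.inr ⟨i, hi, o,
        (mem_offsL G hi.2).mpr ho, b, hb, d, hd, h.symm⟩))))



/-! #### Supports of the rules -/

lemma PL_support {r : ArrRule} (hr : r ∈ PL G) :
    ∀ z : ℤ, z ≠ 0 → z ≠ 1 → z ≠ -1 → r.A1 z = none ∧ r.A2 z = none := by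
  intro z hz0 hz1 hzm
  rcases (mem_PL G).mp hr with rfl | ⟨b, hb, rfl⟩ | ⟨i, b, hi, hb, rfl⟩ |
    ⟨v, b, d, hv, hb, hd, rfl⟩ | ⟨i, o, b, d, hi, ho, hb, hd, rfl⟩
  · simp [eraseRule, hz0]
  · simp [exitRule, hz0]
  · simp [entryRule, hz0]
  · have hzv : z ≠ v := by rcases hv with rfl | rfl <;> assumption
    simp [moveRule, hz0, hzv]
  · simp [workRule, hz0, hz1]

def slotsOf (r : ArrRule) : List (Option ℕ) :=
  [r.A1 0, r.A1 1, r.A1 (-1), r.A2 0, r.A2 1, r.A2 (-1)]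

noncomputable def extraSyms : Finset ℕ :=
  ((PL G).flatMap (fun r => (slotsOf r).filterMap id)).toFinset.filter (fun s => s ∉ G.T)

noncomputable def NN : Finset ℕ := G.N ∪ extraSyms G

lemma slot_in_N {r : ArrRule} {z : ℤ} {s : ℕ} (hr : r ∈ PL G)
    (hz : z = 0 ∨ z = 1 ∨ z = -1) (hs : r.A1 z = some s ∨ r.A2 z = some s)
    (hT : s ∉ G.T) : s ∈ NN G := by
  refine Finset.mem_union_right _ (Finset.mem_filter.mpr ⟨List.mem_toFinset.mpr
    (List.mem_flatMap.mpr ⟨r, hr, List.mem_filterMap.mpr ⟨some s, ?_, rfl⟩⟩), hT⟩)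
  rcases hz with rfl | rfl | rfl <;> rcases hs with h | h <;>
    simp [slotsOf, ← h]

lemma NT_sub {s : ℕ} (h : s ∈ G.N ∪ G.T) : s ∈ NN G ∪ G.T := by
  rcases Finset.mem_union.mp h with h | h
  · exact Finset.mem_union_left _ (Finset.mem_union_left _ h)
  · exact Finset.mem_union_right _ h

lemma slot_in_NT {r : ArrRule} {z : ℤ} {s : ℕ} (hr : r ∈ PL G)
    (hz : z = 0 ∨ z = 1 ∨ z = -1) (hs : r.A1 z = some s ∨ r.A2 z = some s) :
    s ∈ NN G ∪ G.T := by
  by_cases hT : s ∈ G.T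
  · exact Finset.mem_union_right _ hT
  · exact Finset.mem_union_left _ (slot_in_N G hr hz hs hT)

lemma eraseRule_mem : eraseRule G ∈ PL G := (mem_PL G).mpr (Or.inl rfl)

lemma MG_in_NN : MG G ∈ NN G :=
  slot_in_N G (eraseRule_mem G) (Or.inl rfl) (Or.inl (by simp [eraseRule]))
    (not_T_of_MG_le G le_rfl)

lemma hcode_notT (k : ℕ) (b : Option ℕ) : hcode G k b ∉ G.T :=
  not_T_of_MG_le G (le_of_lt (MG_lt_hcode G k b))

/-! #### The axiom and values of derivable arrays -/

def OkArr (C : Arr) : Prop := ∀ z, OkB G (C z)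

lemma okArr_ax : OkArr G G.ax := by
  intro z
  cases h : G.ax z with
  | none => exact Or.inl rfl
  | some s => exact Or.inr ⟨s, G.axAlph s ⟨z, h⟩, rfl⟩

lemma okArr_step {C1 C2 : Arr} (h1 : OkArr G C1) (h : G.step C1 C2) : OkArr G C2 := by
  obtain ⟨p, hp, v, hfr, hpat⟩ := h
  intro z
  by_cases hz : z - v ∈ p.W
  · have := (hpat _ hz).2
    rw [show v + (z - v) = z by ring] at this
    rw [this]
    cases h2 : p.A2 (z - v) with
    | none => exact Or.inl rfl
    | some s => exact Or.inr ⟨s, ((G.PAlph p hp).2 s ⟨_, h2⟩), rfl⟩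
  · rw [← hfr z hz]; exact h1 z

lemma okArr_derives {C : Arr} (h : G.derives G.ax C) : OkArr G C := by
  induction h with
  | refl => exact okArr_ax G
  | tail _ hstep ih => exact okArr_step G ih hstep

noncomputable def axG' : Arr := fun z => if z = 0 then some (idleCode G (G.ax 0)) else G.ax z

lemma exitRule_mem {b : Option ℕ} (hb : OkB G b) : exitRule G b ∈ PL G :=
  (mem_PL G).mpr (Or.inr (Or.inl ⟨b, hb, rfl⟩))

/-! #### The normal-form grammar -/

noncomputable def GG : Grammar where
  N := NN G
  T := G.T
  disj := by
    rw [Finset.disjoint_left]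
    intro s hs hT
    rcases Finset.mem_union.mp hs with h | h
    · exact (Finset.disjoint_left.mp G.disj h) hT
    · exact (Finset.mem_filter.mp h).2 hT
  ax := axG' G
  axFin := by
    apply (G.axFin.union (Set.finite_singleton 0)).subset
    intro z hz
    by_cases h0 : z = 0
    · exact Or.inr h0
    · exact Or.inl (by simpa [axG', h0] using hz)
  axAlph := by
    intro s ⟨v, hv⟩
    by_cases h0 : v = 0
    · subst h0
      have hv' : idleCode G (G.ax 0) = s := by simpa [axG'] using hv
      subst hv'
      refine Finset.mem_union_left _ (slot_in_N G (exitRule_mem G (okArr_ax G 0))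
        (Or.inl rfl) (Or.inl (by simp [exitRule])) (hcode_notT G _ _))
    · rw [show axG' G v = G.ax v by simp [axG', h0]] at hv
      exact NT_sub G (G.axAlph s ⟨v, hv⟩)
  P := PL G
  PAlph := by
    intro p hp
    constructor <;> intro s ⟨v, hv⟩
    · by_cases hz : v = 0 ∨ v = 1 ∨ v = -1
      · exact slot_in_NT G hp hz (Or.inl hv)
      · push_neg at hz
        rw [(PL_support G hp v hz.1 hz.2.1 hz.2.2).1] at hv
        exact absurd hv (by simp)
    · by_cases hz : v = 0 ∨ v = 1 ∨ v = -1
      · exact slot_in_NT G hp hz (Or.inr hv)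
      · push_neg at hz
        rw [(PL_support G hp v hz.1 hz.2.1 hz.2.2).2] at hv
        exact absurd hv (by simp)

lemma GG_N : (GG G).N = NN G := rfl
lemma GG_T : (GG G).T = G.T := rfl
lemma GG_P : (GG G).P = PL G := rfl

/-! #### Normal form of the rules -/

lemma PL_normal : ∀ p ∈ (GG G).P, NormalFormRule (GG G) p := by
  intro p hp
  have hp' : p ∈ PL G := hp
  rcases (mem_PL G).mp hp' with rfl | ⟨b, hb, rfl⟩ | ⟨i, b, hi, hb, rfl⟩ |
    ⟨v, b, d, hv, hb, hd, rfl⟩ | ⟨i, o, b, d, hi, ho, hb, hd, rfl⟩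
  · -- erase
    refine Or.inl ⟨rfl, ⟨MG G, MG_in_NN G, by simp [eraseRule]⟩, Or.inl rfl⟩
  · -- exit
    refine Or.inl ⟨rfl, ⟨idleCode G b, slot_in_N G hp' (Or.inl rfl)
      (Or.inl (by simp [exitRule])) (hcode_notT G _ _), by simp [exitRule]⟩, ?_⟩
    rcases hb with rfl | ⟨s, hs, rfl⟩
    · exact Or.inl (by simp [exitRule])
    · exact Or.inr ⟨s, NT_sub G hs, by simp [exitRule]⟩
  · -- entry
    exact Or.inl ⟨rfl, ⟨idleCode G b, slot_in_N G hp' (Or.inl rfl)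
      (Or.inl (by simp [entryRule])) (hcode_notT G _ _), by simp [entryRule]⟩,
      Or.inr ⟨workCode G i (loI G i) b, slot_in_NT G hp' (Or.inl rfl)
        (Or.inr (by simp [entryRule])), by simp [entryRule]⟩⟩
  · -- move
    have hv0 : v ≠ 0 := by rcases hv with rfl | rfl <;> decide
    have hzv : v = 0 ∨ v = 1 ∨ v = -1 := Or.inr (by tauto)
    refine Or.inr ⟨v, hv, rfl,
      ⟨idleCode G b, slot_in_NT G hp' (Or.inl rfl) (Or.inl (by simp [moveRule])),
        by simp [moveRule]⟩,
      ⟨repB G b, slot_in_NT G hp' (Or.inl rfl) (Or.inr (by simp [moveRule])),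
        by simp [moveRule]⟩,
      ⟨idleCode G (decC G d), slot_in_NT G hp' hzv
        (Or.inr (by simp [moveRule, hv0])), by simp [moveRule, hv0]⟩, ?_⟩
    rcases hd with rfl | rfl | ⟨s, hs, rfl⟩
    · exact Or.inr ⟨MG G, Finset.mem_union_left _ (MG_in_NN G), by simp [moveRule, hv0]⟩
    · exact Or.inl (by simp [moveRule, hv0])
    · exact Or.inr ⟨s, NT_sub G hs, by simp [moveRule, hv0]⟩
  · -- work
    refine Or.inr ⟨1, Or.inl rfl, rfl,
      ⟨workCode G i o b, slot_in_NT G hp' (Or.inl rfl) (Or.inl (by simp [workRule])),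
        by simp [workRule]⟩,
      ⟨repB G (if o ∈ WI G i then (pR G i).A2 o else b),
        slot_in_NT G hp' (Or.inl rfl) (Or.inr (by simp [workRule])),
        by simp [workRule]⟩,
      ⟨if o + 1 ≤ hiI G i then workCode G i (o + 1) (decC G d) else idleCode G (decC G d),
        slot_in_NT G hp' (Or.inr (Or.inl rfl)) (Or.inr (by simp [workRule])),
        by simp [workRule]⟩, ?_⟩
    rcases hd with rfl | rfl | ⟨s, hs, rfl⟩
    · exact Or.inr ⟨MG G, Finset.mem_union_left _ (MG_in_NN G), by simp [workRule]⟩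
    · exact Or.inl (by simp [workRule])
    · exact Or.inr ⟨s, NT_sub G hs, by simp [workRule]⟩



/-! #### Reading off rule applications -/

lemma apply_single {r : ArrRule} (hW : r.W = {0}) {u : ℤ} {D1 D2 : Arr}
    (h : r.applyAt u D1 D2) :
    D1 u = r.A1 0 ∧ D2 u = r.A2 0 ∧ ∀ z, z ≠ u → D2 z = D1 z := by
  obtain ⟨hfr, hpat⟩ := h
  have h0 := hpat 0 (by rw [hW]; simp)
  rw [add_zero] at h0
  exact ⟨h0.1, h0.2, fun z hz => (hfr z (by rw [hW]; simp; omega)).symm⟩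

lemma apply_pair {r : ArrRule} {v : ℤ} (hW : r.W = {0, v}) (hv : v ≠ 0)
    {u : ℤ} {D1 D2 : Arr} (h : r.applyAt u D1 D2) :
    D1 u = r.A1 0 ∧ D1 (u + v) = r.A1 v ∧ D2 u = r.A2 0 ∧ D2 (u + v) = r.A2 v ∧
      ∀ z, z ≠ u → z ≠ u + v → D2 z = D1 z := by
  obtain ⟨hfr, hpat⟩ := h
  have h0 := hpat 0 (by rw [hW]; simp)
  have hv' := hpat v (by rw [hW]; simp)
  rw [add_zero] at h0
  refine ⟨h0.1, hv'.1, h0.2, hv'.2, fun z hz1 hz2 => (hfr z ?_).symm⟩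
  rw [hW]; simp; omega

lemma applyAt_single_intro {r : ArrRule} (hW : r.W = {0}) {u : ℤ} {D1 D2 : Arr}
    (h1 : D1 u = r.A1 0) (h2 : D2 u = r.A2 0) (h3 : ∀ z, z ≠ u → D2 z = D1 z) :
    r.applyAt u D1 D2 := by
  constructor
  · intro w hw
    rw [hW] at hw; simp at hw
    exact (h3 w (by omega)).symm
  · intro w hw
    rw [hW] at hw; simp at hw; subst hw
    rw [add_zero]; exact ⟨h1, h2⟩

lemma applyAt_pair_intro {r : ArrRule} {v : ℤ} (hW : r.W = {0, v}) {u : ℤ} {D1 D2 : Arr}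
    (h1 : D1 u = r.A1 0) (h1' : D1 (u + v) = r.A1 v)
    (h2 : D2 u = r.A2 0) (h2' : D2 (u + v) = r.A2 v)
    (h3 : ∀ z, z ≠ u → z ≠ u + v → D2 z = D1 z) :
    r.applyAt u D1 D2 := by
  constructor
  · intro w hw
    rw [hW] at hw; simp at hw
    exact (h3 w (by omega) (by omega)).symm
  · intro w hw
    rw [hW] at hw; simp at hw
    rcases hw with rfl | rfl
    · rw [add_zero]; exact ⟨h1, h2⟩
    · exact ⟨h1', h2'⟩

/-! #### The soundness invariant -/

def HSet (D : Arr) : Set ℤ := {z | ∃ s, D z = some s ∧ MG G + 1 ≤ s}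

def DecA (D : Arr) : Arr := fun z => decC G (D z)

lemma mem_HSet_hcode {D : Arr} {x : ℤ} {k : ℕ} {b : Option ℕ}
    (h : D x = some (hcode G k b)) : x ∈ HSet G D :=
  ⟨_, h, by unfold hcode; omega⟩

lemma not_mem_HSet_of_le {D : Arr} {z : ℤ} {s : ℕ} (h : D z = some s) (hs : s ≤ MG G) :
    z ∉ HSet G D := by
  rintro ⟨s', h', hle⟩
  rw [h] at h'
  injection h' with e
  omega

lemma not_mem_HSet_none {D : Arr} {z : ℤ} (h : D z = none) : z ∉ HSet G D := by
  rintro ⟨s', h', hle⟩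
  rw [h] at h'
  exact absurd h' (by simp)

lemma not_mem_HSet_OkB {D : Arr} {z : ℤ} {b : Option ℕ} (h : D z = b) (hb : OkB G b) :
    z ∉ HSet G D := by
  rcases hb with rfl | ⟨s, hs, rfl⟩
  · exact not_mem_HSet_none G h
  · exact not_mem_HSet_of_le G h (le_of_lt (lt_MG G hs))

lemma not_mem_HSet_OkD {D : Arr} {z : ℤ} {d : Option ℕ} (h : D z = d) (hd : OkD G d) :
    z ∉ HSet G D := by
  rcases hd with rfl | hb
  · exact not_mem_HSet_of_le G h le_rfl
  · exact not_mem_HSet_OkB G h hb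

lemma OkB_A2 {i : ℕ} (hi : i < G.P.length) (w : ℤ) : OkB G ((pR G i).A2 w) := by
  cases h : (pR G i).A2 w with
  | none => exact Or.inl rfl
  | some s => exact Or.inr ⟨s, (G.PAlph _ (pR_mem G hi)).2 s ⟨w, h⟩, rfl⟩

lemma OkB_A1 {i : ℕ} (hi : i < G.P.length) (w : ℤ) : OkB G ((pR G i).A1 w) := by
  cases h : (pR G i).A1 w with
  | none => exact Or.inl rfl
  | some s => exact Or.inr ⟨s, (G.PAlph _ (pR_mem G hi)).1 s ⟨w, h⟩, rfl⟩

/-- The soundness invariant: either no head is present and the decoded array is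
derivable, or there is exactly one head, idle (decoded array derivable) or working
(a rule is partially applied). -/
def Inv (D : Arr) : Prop :=
  (HSet G D = ∅ ∧ G.derives G.ax (DecA G D)) ∨
  (∃ x b, OkB G b ∧ HSet G D = {x} ∧
    ((D x = some (idleCode G b) ∧ G.derives G.ax (DecA G D)) ∨
     (∃ i o, i < G.P.length ∧ (WI G i).Nonempty ∧ loI G i ≤ o ∧ o ≤ hiI G i ∧
       D x = some (workCode G i o b) ∧
       ∃ C, G.derives G.ax C ∧
         (∀ w ∈ WI G i, w < o → C (x - o + w) = (pR G i).A1 w) ∧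
         (∀ z : ℤ, DecA G D z =
           if z - (x - o) ∈ WI G i ∧ z - (x - o) < o
           then (pR G i).A2 (z - (x - o)) else C z)))) 

lemma Inv_transport {D1 D2 : Arr} (h : Inv G D1)
    (hdec : ∀ z, decC G (D2 z) = decC G (D1 z))
    (hH : ∀ z, z ∈ HSet G D2 ↔ z ∈ HSet G D1)
    (hhead : ∀ z ∈ HSet G D1, D2 z = D1 z) : Inv G D2 := by
  have hdec' : DecA G D2 = DecA G D1 := funext hdec
  have hH' : HSet G D2 = HSet G D1 := Set.ext hH
  rcases h with ⟨h1, h2⟩ | ⟨x, b, hb, hHs, hcase⟩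
  · exact Or.inl ⟨by rw [hH', h1], by rw [hdec']; exact h2⟩
  · have hx : x ∈ HSet G D1 := by rw [hHs]; rfl
    refine Or.inr ⟨x, b, hb, by rw [hH', hHs], ?_⟩
    rw [hhead x hx, hdec']
    exact hcase



lemma decC_idleCode {b : Option ℕ} (hb : OkB G b) :
    decC G (some (idleCode G b)) = b := decC_hcode G hb 0

lemma decC_workCode {b : Option ℕ} (hb : OkB G b) {i : ℕ} {o : ℤ} :
    decC G (some (workCode G i o b)) = b := decC_hcode G hb _

lemma decC_D_eq {D : Arr} {z : ℤ} {a : Option ℕ} (h : D z = a) :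
    decC G (D z) = decC G a := by rw [h]

lemma HSet_congr {D1 D2 : Arr} {z : ℤ} (h : D2 z = D1 z) :
    z ∈ HSet G D2 ↔ z ∈ HSet G D1 := by
  unfold HSet
  simp only [Set.mem_setOf_eq, h]

lemma Inv_step {D1 D2 : Arr} (h1 : Inv G D1) (hstep : (GG G).step D1 D2) :
    Inv G D2 := by
  obtain ⟨r, hrP, u, happ⟩ := hstep
  rcases (mem_PL G).mp hrP with rfl | ⟨b', hb', rfl⟩ | ⟨i, b', hib, hb', rfl⟩ |
    ⟨v, b', d, hv, hb', hd, rfl⟩ | ⟨i, o, b', d, hio, hoo, hbc, hd, rfl⟩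
  · -- erase rule
    obtain ⟨e1, e2, efr⟩ := apply_single (r := eraseRule G) rfl happ
    simp [eraseRule] at e1 e2
    have hu1 : u ∉ HSet G D1 := not_mem_HSet_of_le G e1 le_rfl
    have hu2 : u ∉ HSet G D2 := not_mem_HSet_none G e2
    refine Inv_transport G h1 ?_ ?_ ?_
    · intro z
      by_cases hz : z = u
      · subst hz; rw [e1, e2, decC_box]; rfl
      · rw [efr z hz]
    · intro z
      by_cases hz : z = u
      · subst hz; exact ⟨fun h => absurd h hu2, fun h => absurd h hu1⟩
      · exact HSet_congr G (efr z hz)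
    · intro z hz
      exact efr z (fun hzu => hu1 (hzu ▸ hz))
  · -- exit rule
    obtain ⟨e1, e2, efr⟩ := apply_single (r := exitRule G b') rfl happ
    simp [exitRule] at e1 e2
    have hu : u ∈ HSet G D1 := mem_HSet_hcode G e1
    rcases h1 with ⟨hH, _⟩ | ⟨x, b, hb, hHs, hcase⟩
    · rw [hH] at hu; exact absurd hu (Set.notMem_empty u)
    · rw [hHs] at hu
      have hxu : u = x := hu
      subst hxu
      rcases hcase with ⟨hDx, hder⟩ | ⟨i, o, _, _, _, _, hDx, _⟩
      · -- idle: commit exit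
        rw [e1] at hDx
        injection hDx with hcode_eq
        obtain ⟨_, rfl⟩ := hcode_inj G hb' hb hcode_eq
        refine Or.inl ⟨?_, ?_⟩
        · ext z
          simp only [Set.mem_empty_iff_false, iff_false]
          by_cases hz : z = u
          · subst hz; exact not_mem_HSet_OkB G e2 hb'
          · rw [HSet_congr G (efr z hz), hHs]; exact hz
        · have : DecA G D2 = DecA G D1 := by
            funext z
            by_cases hz : z = u
            · subst hz
              show decC G (D2 _) = decC G (D1 _)
              rw [e1, e2, decC_idleCode G hb', decC_id G hb']
            · show decC G (D2 _) = decC G (D1 _)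
              rw [efr z hz]
          rw [this]; exact hder
      · rw [e1] at hDx
        injection hDx with hcode_eq
        exact absurd hcode_eq (idle_ne_work G hb' hb)
  · -- entry rule
    obtain ⟨e1, e2, efr⟩ := apply_single (r := entryRule G i b') rfl happ
    simp [entryRule] at e1 e2
    have hu : u ∈ HSet G D1 := mem_HSet_hcode G e1
    rcases h1 with ⟨hH, _⟩ | ⟨x, b, hb, hHs, hcase⟩
    · rw [hH] at hu; exact absurd hu (Set.notMem_empty u)
    · rw [hHs] at hu
      have hxu : u = x := hu
      subst hxu
      rcases hcase with ⟨hDx, hder⟩ | ⟨i0, o0, _, _, _, _, hDx, _⟩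
      swap
      · rw [e1] at hDx
        injection hDx with hcode_eq
        exact absurd hcode_eq (idle_ne_work G hb' hb)
      rw [e1] at hDx
      injection hDx with hcode_eq
      obtain ⟨_, rfl⟩ := hcode_inj G hb' hb hcode_eq
      have hdec : DecA G D2 = DecA G D1 := by
        funext z
        by_cases hz : z = u
        · subst hz
          show decC G (D2 _) = decC G (D1 _)
          rw [e1, e2, decC_workCode G hb', decC_idleCode G hb']
        · show decC G (D2 _) = decC G (D1 _)
          rw [efr z hz]
      have hHs2 : HSet G D2 = {u} := by
        ext z
        by_cases hz : z = u
        · subst hz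
          exact ⟨fun _ => rfl, fun _ => mem_HSet_hcode G e2⟩
        · rw [HSet_congr G (efr z hz), hHs]
      refine Or.inr ⟨u, b', hb', hHs2, Or.inr ⟨i, loI G i, hib.1, hib.2, le_rfl,
        loI_le_hiI G hib.2, e2, DecA G D1, hder, ?_, ?_⟩⟩
      · intro w hw hwlt
        exact absurd hwlt (not_lt.mpr (loI_le G hw))
      · intro z
        rw [hdec]
        rw [if_neg]
        rintro ⟨hmem, hlt⟩
        exact absurd hlt (not_lt.mpr (loI_le G hmem))
  · -- move rule
    have hv0 : v ≠ 0 := by rcases hv with rfl | rfl <;> decide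
    obtain ⟨e1, e1', e2, e2', efr⟩ := apply_pair (r := moveRule G v b' d) rfl hv0 happ
    simp [moveRule, hv0] at e1 e1' e2 e2'
    have hu : u ∈ HSet G D1 := mem_HSet_hcode G e1
    rcases h1 with ⟨hH, _⟩ | ⟨x, b, hb, hHs, hcase⟩
    · rw [hH] at hu; exact absurd hu (Set.notMem_empty u)
    · rw [hHs] at hu
      have hxu : u = x := hu
      subst hxu
      rcases hcase with ⟨hDx, hder⟩ | ⟨i0, o0, _, _, _, _, hDx, _⟩
      swap
      · rw [e1] at hDx
        injection hDx with hcode_eq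
        exact absurd hcode_eq (idle_ne_work G hb' hb)
      rw [e1] at hDx
      injection hDx with hcode_eq
      obtain ⟨_, rfl⟩ := hcode_inj G hb' hb hcode_eq
      have hbd : OkB G (decC G d) := OkB_decC_of_OkD G hd
      have huv : u + v ≠ u := by omega
      have hdec : DecA G D2 = DecA G D1 := by
        funext z
        by_cases hz : z = u
        · subst hz
          show decC G (D2 _) = decC G (D1 _)
          rw [e1, e2, decC_idleCode G hb', decC_repB G hb']
        · by_cases hz' : z = u + v
          · subst hz'
            show decC G (D2 _) = decC G (D1 _)
            rw [e1', e2', decC_idleCode G hbd]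
          · show decC G (D2 _) = decC G (D1 _)
            rw [efr z hz hz']
      have hHs2 : HSet G D2 = {u + v} := by
        ext z
        by_cases hz' : z = u + v
        · subst hz'
          exact ⟨fun _ => rfl, fun _ => mem_HSet_hcode G e2'⟩
        · by_cases hz : z = u
          · subst hz
            constructor
            · intro h
              exact absurd h (not_mem_HSet_of_le G e2 (repB_le G hb))
            · intro h
              rw [Set.mem_singleton_iff] at h
              exact absurd h huv.symm
          · rw [HSet_congr G (efr z hz hz'), hHs]; simp [hz, hz']
      exact Or.inr ⟨u + v, decC G d, hbd, hHs2, Or.inl ⟨e2', by rw [hdec]; exact hder⟩⟩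
  · -- work rule
    obtain ⟨e1, e1', e2, e2', efr⟩ :=
      apply_pair (r := workRule G i o b' d) rfl one_ne_zero happ
    simp [workRule] at e1 e1' e2 e2'
    have hu : u ∈ HSet G D1 := mem_HSet_hcode G e1
    rcases h1 with ⟨hH, _⟩ | ⟨x, b, hb, hHs, hcase⟩
    · rw [hH] at hu; exact absurd hu (Set.notMem_empty u)
    · rw [hHs] at hu
      have hxu : u = x := hu
      subst hxu
      rcases hcase with ⟨hDx, hder⟩ | ⟨i0, o0, hi0, hne0, hlo0, hhi0, hDx, C, hderC, hmatch, hdecEq⟩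
      · rw [e1] at hDx
        injection hDx with hcode_eq
        exact absurd hcode_eq (idle_ne_work G hb hbc.1).symm
      rw [e1] at hDx
      injection hDx with hcode_eq
      obtain ⟨hK, rfl⟩ := hcode_inj G hbc.1 hb hcode_eq
      obtain ⟨rfl, rfl⟩ := workK_inj G hoo.1 hlo0 hK
      -- now the head at u is in state (i, o) carrying b' = b
      have hbd : OkB G (decC G d) := OkB_decC_of_OkD G hd
      set v0 := u - o with hv0def
      have hCu : C u = b' := by
        have h := hdecEq u
        rw [if_neg (by rintro ⟨_, hlt⟩; omega)] at h
        rw [← h]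
        show decC G (D1 u) = b'
        rw [e1, decC_workCode G hbc.1]
      set b2 : Option ℕ := if o ∈ WI G i then (pR G i).A2 o else b' with hb2def
      have hb2 : OkB G b2 := by
        rw [hb2def]
        split
        · exact OkB_A2 G hio.1 o
        · exact hbc.1
      have huv : u + 1 ≠ u := by omega
      -- decoded array of D2
      have hdec2 : ∀ z : ℤ, DecA G D2 z =
          if z - v0 ∈ WI G i ∧ z - v0 < o + 1 then (pR G i).A2 (z - v0) else C z := by
        intro z
        by_cases hz : z = u
        · subst hz
          have he : DecA G D2 z = b2 := by
            show decC G (D2 _) = b2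
            rw [e2, decC_repB G hb2]
          rw [he]
          have hzv : z - v0 = o := by omega
          rw [hzv, hb2def]
          by_cases hmem : o ∈ WI G i
          · rw [if_pos hmem, if_pos ⟨hmem, by omega⟩]
          · rw [if_neg hmem, if_neg (by rintro ⟨h', _⟩; exact hmem h'), hCu]
        · by_cases hz' : z = u + 1
          · subst hz'
            have he : DecA G D2 (u + 1) = decC G d := by
              show decC G (D2 _) = decC G d
              rw [e2']
              split
              · rw [decC_workCode G hbd]
              · rw [decC_idleCode G hbd]
            rw [he]
            have h := hdecEq (u + 1)
            rw [if_neg (by rintro ⟨_, hlt⟩; omega)] at h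
            rw [show (decC G d : Option ℕ) = C (u + 1) from by
              rw [← h]; show decC G d = decC G (D1 _); rw [e1']]
            rw [if_neg (by rintro ⟨_, hlt⟩; omega)]
          · have he : DecA G D2 z = DecA G D1 z := by
              show decC G (D2 _) = decC G (D1 _)
              rw [efr z hz hz']
            rw [he, hdecEq z]
            have hne_o : z - v0 ≠ o := by omega
            by_cases hmem : z - v0 ∈ WI G i
            · by_cases hlt : z - v0 < o
              · rw [if_pos ⟨hmem, hlt⟩, if_pos ⟨hmem, by omega⟩]
              · rw [if_neg (by rintro ⟨_, h'⟩; exact hlt h'),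
                   if_neg (by rintro ⟨_, h'⟩; omega)]
            · rw [if_neg (by rintro ⟨h', _⟩; exact hmem h'),
                 if_neg (by rintro ⟨h', _⟩; exact hmem h')]
      have hmatch2 : ∀ w ∈ WI G i, w < o + 1 → C (v0 + w) = (pR G i).A1 w := by
        intro w hw hwlt
        by_cases hwo : w < o
        · have := hmatch w hw hwo
          rw [show u - o + w = v0 + w from by omega] at this
          exact this
        · have hweq : w = o := by omega
          subst hweq
          rw [show v0 + w = u from by omega, hCu]
          exact hbc.2 hw
      have hHs2 : HSet G D2 = {u + 1} := by
        ext z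
        by_cases hz' : z = u + 1
        · subst hz'
          rw [Set.mem_singleton_iff]
          refine ⟨fun _ => rfl, fun _ => ?_⟩
          show ∃ s, D2 (u + 1) = some s ∧ MG G + 1 ≤ s
          refine ⟨_, e2', ?_⟩
          split
          · unfold workCode hcode; omega
          · unfold idleCode hcode; omega
        · by_cases hz : z = u
          · subst hz
            constructor
            · intro h
              exact absurd h (not_mem_HSet_of_le G e2 (repB_le G hb2))
            · intro h
              rw [Set.mem_singleton_iff] at h
              exact absurd h huv.symm
          · rw [HSet_congr G (efr z hz hz'), hHs]; simp [hz, hz']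
      by_cases hlast : o + 1 ≤ hiI G i
      · -- continue working
        rw [if_pos (by omega : o < hiI G i)] at e2'
        refine Or.inr ⟨u + 1, decC G d, hbd, hHs2, Or.inr ⟨i, o + 1, hio.1, hio.2,
          by omega, hlast, e2', C, hderC, ?_, ?_⟩⟩
        · intro w hw hwlt
          rw [show u + 1 - (o + 1) + w = v0 + w from by omega]
          exact hmatch2 w hw hwlt
        · intro z
          rw [show z - (u + 1 - (o + 1)) = z - v0 from by omega]
          exact hdec2 z
      · -- commit: the full rule has been applied
        rw [if_neg (by omega : ¬ o < hiI G i)] at e2'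
        have hstep : G.step C (DecA G D2) := by
          refine ⟨pR G i, pR_mem G hio.1, v0, ?_, ?_⟩
          · intro z hz
            rw [hdec2 z, if_neg (by rintro ⟨h', _⟩; exact hz h')]
          · intro w hw
            have hwlt : w < o + 1 := by
              have := le_hiI G hw
              omega
            constructor
            · exact hmatch2 w hw hwlt
            · rw [hdec2 (v0 + w),
                 if_pos (by rw [show v0 + w - v0 = w from by omega]; exact ⟨hw, hwlt⟩)]
              rw [show v0 + w - v0 = w from by omega]
        exact Or.inr ⟨u + 1, decC G d, hbd, hHs2,
          Or.inl ⟨e2', hderC.tail hstep⟩⟩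



/-! #### Soundness -/

lemma DecA_axG' : DecA G (axG' G) = G.ax := by
  funext z
  by_cases hz : z = 0
  · subst hz
    show decC G (axG' G 0) = G.ax 0
    rw [show axG' G 0 = some (idleCode G (G.ax 0)) from by simp [axG']]
    exact decC_idleCode G (okArr_ax G 0)
  · show decC G (axG' G z) = G.ax z
    rw [show axG' G z = G.ax z from by simp [axG', hz]]
    exact decC_id G (okArr_ax G z)

lemma Inv_init : Inv G (axG' G) := by
  refine Or.inr ⟨0, G.ax 0, okArr_ax G 0, ?_, Or.inl ⟨by simp [axG'],
    by rw [DecA_axG']; exact Relation.ReflTransGen.refl⟩⟩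
  ext z
  by_cases hz : z = 0
  · subst hz
    refine ⟨fun _ => rfl, fun _ => mem_HSet_hcode G (k := 0) (b := G.ax 0) ?_⟩
    simp [axG', idleCode]
  · constructor
    · intro h
      exact absurd h (not_mem_HSet_OkB G (show axG' G z = G.ax z from by simp [axG', hz])
        (okArr_ax G z))
    · intro h
      rw [Set.mem_singleton_iff] at h
      exact absurd h hz

lemma Inv_derives {D : Arr} (h : (GG G).derives (axG' G) D) : Inv G D := by
  induction h with
  | refl => exact Inv_init G
  | tail _ hstep ih => exact Inv_step G ih hstep

lemma soundness {A : Arr} (hder : (GG G).derives (axG' G) A) (hov : overAlph G.T A) :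
    G.derives G.ax A := by
  have hInv := Inv_derives G hder
  have hnohead : HSet G A = ∅ := by
    ext z
    simp only [Set.mem_empty_iff_false, iff_false]
    rintro ⟨s, hs, hle⟩
    have hsT := hov s ⟨z, hs⟩
    have := lt_MG G (Finset.mem_union_right _ hsT)
    omega
  have hA : DecA G A = A := by
    funext z
    cases hz : A z with
    | none => show decC G (A z) = none; rw [hz]; rfl
    | some s =>
      show decC G (A z) = some s
      rw [hz]
      exact decC_id G (Or.inr ⟨s, Finset.mem_union_right _ (hov s ⟨z, hz⟩), rfl⟩)
  rcases hInv with ⟨_, hd⟩ | ⟨x, b, _, hHs, _⟩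
  · rwa [hA] at hd
  · have hx : x ∈ HSet G A := by rw [hHs]; rfl
    rw [hnohead] at hx
    exact absurd hx (Set.notMem_empty x)

/-! #### Completeness: moving the idle head around -/

/-- An array `C` with an idle head sitting at position `x`. -/
noncomputable def encH (C : Arr) (x : ℤ) : Arr :=
  fun z => if z = x then some (idleCode G (C x)) else C z

lemma encH_step_right {C : Arr} (hC : OkArr G C) (x : ℤ) :
    (GG G).derives (encH G C x) (encH G C (x + 1)) := by
  have hx1 : x + 1 ≠ x := by omega
  set D' : Arr := fun z => if z = x then some (repB G (C x)) else encH G C (x + 1) z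
    with hD'def
  have hmem : moveRule G 1 (C x) (C (x + 1)) ∈ (GG G).P :=
    (mem_PL G).mpr (Or.inr (Or.inr (Or.inr (Or.inl
      ⟨1, C x, C (x + 1), Or.inl rfl, hC x, Or.inr (hC (x + 1)), rfl⟩))))
  have hstep1 : (GG G).step (encH G C x) D' := by
    refine ⟨_, hmem, x, applyAt_pair_intro rfl ?_ ?_ ?_ ?_ ?_⟩
    · simp [encH, moveRule]
    · simp [encH, moveRule, hx1]
    · simp [hD'def, moveRule]
    · simp [hD'def, encH, moveRule, hx1, decC_id G (hC (x + 1))]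
    · intro z hz hz'
      simp [hD'def, encH, moveRule, hz, hz']
  cases hcx : C x with
  | some s =>
    have hEq : D' = encH G C (x + 1) := by
      funext z
      by_cases hz : z = x
      · subst hz
        simp [hD'def, encH, hx1.symm, hcx, repB]
      · simp [hD'def, hz]
    rw [hEq] at hstep1
    exact Relation.ReflTransGen.single hstep1
  | none =>
    have hstep2 : (GG G).step D' (encH G C (x + 1)) := by
      refine ⟨eraseRule G, eraseRule_mem G, x, applyAt_single_intro rfl ?_ ?_ ?_⟩
      · simp [hD'def, eraseRule, hcx, repB]
      · simp [encH, eraseRule, hx1.symm, hcx]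
      · intro z hz
        simp [hD'def, hz]
    exact (Relation.ReflTransGen.single hstep1).tail hstep2

lemma encH_step_left {C : Arr} (hC : OkArr G C) (x : ℤ) :
    (GG G).derives (encH G C x) (encH G C (x - 1)) := by
  have hx1 : x - 1 ≠ x := by omega
  set D' : Arr := fun z => if z = x then some (repB G (C x)) else encH G C (x - 1) z
    with hD'def
  have hmem : moveRule G (-1) (C x) (C (x - 1)) ∈ (GG G).P :=
    (mem_PL G).mpr (Or.inr (Or.inr (Or.inr (Or.inl
      ⟨-1, C x, C (x - 1), Or.inr rfl, hC x, Or.inr (hC (x - 1)), rfl⟩))))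
  have hstep1 : (GG G).step (encH G C x) D' := by
    refine ⟨_, hmem, x, applyAt_pair_intro rfl ?_ ?_ ?_ ?_ ?_⟩
    · simp [encH, moveRule]
    · rw [show x + (-1) = x - 1 from by ring]
      simp [encH, moveRule, hx1]
    · simp [hD'def, moveRule]
    · rw [show x + (-1) = x - 1 from by ring]
      simp [hD'def, encH, moveRule, hx1, decC_id G (hC (x - 1))]
    · intro z hz hz'
      rw [show x + (-1) = x - 1 from by ring] at hz'
      simp [hD'def, encH, moveRule, hz, hz']
  cases hcx : C x with
  | some s =>
    have hEq : D' = encH G C (x - 1) := by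
      funext z
      by_cases hz : z = x
      · subst hz
        simp [hD'def, encH, hx1.symm, hcx, repB]
      · simp [hD'def, hz]
    rw [hEq] at hstep1
    exact Relation.ReflTransGen.single hstep1
  | none =>
    have hstep2 : (GG G).step D' (encH G C (x - 1)) := by
      refine ⟨eraseRule G, eraseRule_mem G, x, applyAt_single_intro rfl ?_ ?_ ?_⟩
      · simp [hD'def, eraseRule, hcx, repB]
      · simp [encH, eraseRule, hx1.symm, hcx]
      · intro z hz
        simp [hD'def, hz]
    exact (Relation.ReflTransGen.single hstep1).tail hstep2

lemma encH_move {C : Arr} (hC : OkArr G C) (x y : ℤ) :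
    (GG G).derives (encH G C x) (encH G C y) := by
  have hr : ∀ n : ℕ, ∀ x : ℤ, (GG G).derives (encH G C x) (encH G C (x + n)) := by
    intro n
    induction n with
    | zero => intro x; rw [show x + ((0:ℕ):ℤ) = x from by push_cast; ring]; exact Relation.ReflTransGen.refl
    | succ n ih =>
      intro x
      refine (ih x).trans ?_
      rw [show x + ((n + 1 : ℕ):ℤ) = (x + n) + 1 from by push_cast; ring]
      exact encH_step_right G hC (x + n)
  have hl : ∀ n : ℕ, ∀ x : ℤ, (GG G).derives (encH G C x) (encH G C (x - n)) := by
    intro n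
    induction n with
    | zero => intro x; rw [show x - ((0:ℕ):ℤ) = x from by push_cast; ring]; exact Relation.ReflTransGen.refl
    | succ n ih =>
      intro x
      refine (ih x).trans ?_
      rw [show x - ((n + 1 : ℕ):ℤ) = (x - n) - 1 from by push_cast; ring]
      exact encH_step_left G hC (x - n)
  rcases le_total x y with h | h
  · have := hr (y - x).toNat x
    rwa [show x + (((y - x).toNat : ℕ):ℤ) = y from by
      rw [Int.toNat_of_nonneg (by omega)]; ring] at this
  · have := hl (x - y).toNat x
    rwa [show x - (((x - y).toNat : ℕ):ℤ) = y from by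
      rw [Int.toNat_of_nonneg (by omega)]; ring] at this



/-! #### Completeness: simulating one rule application -/

lemma okArr_applyAt {i : ℕ} (hi : i < G.P.length) {v : ℤ} {C1 C2 : Arr}
    (ha : (pR G i).applyAt v C1 C2) (hC1 : OkArr G C1) : OkArr G C2 := by
  intro z
  by_cases hz : z - v ∈ (pR G i).W
  · have := (ha.2 _ hz).2
    rw [show v + (z - v) = z from by ring] at this
    rw [this]
    exact OkB_A2 G hi _
  · rw [← ha.1 z hz]; exact hC1 z

lemma sim_rule {i : ℕ} (hi : i < G.P.length) (hne : (WI G i).Nonempty)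
    {v : ℤ} {C1 C2 : Arr} (ha : (pR G i).applyAt v C1 C2) (hC1 : OkArr G C1) :
    (GG G).derives (encH G C1 (v + loI G i)) (encH G C2 (v + hiI G i + 1)) := by
  obtain ⟨hfr, hpat⟩ := ha
  have hlh : loI G i ≤ hiI G i := loI_le_hiI G hne
  -- the intermediate configurations
  set F : ℤ → Arr := fun o z =>
    if z = v + o then
      some (if o ≤ hiI G i then workCode G i o (C1 (v + o)) else idleCode G (C1 (v + o)))
    else if z - v ∈ WI G i ∧ z - v < o then C2 z else C1 z with hFdef
  -- Step A : entry
  have hstepA : (GG G).step (encH G C1 (v + loI G i)) (F (loI G i)) := by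
    refine ⟨entryRule G i (C1 (v + loI G i)),
      (mem_PL G).mpr (Or.inr (Or.inr (Or.inl ⟨i, C1 (v + loI G i), ⟨hi, hne⟩,
        hC1 _, rfl⟩))), v + loI G i, applyAt_single_intro rfl ?_ ?_ ?_⟩
    · simp [encH, entryRule]
    · simp [hFdef, entryRule, hlh]
    · intro z hz
      simp only [hFdef, encH, if_neg hz]
      rw [if_neg (by rintro ⟨h1, h2⟩; exact absurd h2 (not_lt.mpr (loI_le G h1)))]
  -- Step B : one work move
  have hstepB : ∀ o : ℤ, loI G i ≤ o → o ≤ hiI G i →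
      (GG G).derives (F o) (F (o + 1)) := by
    intro o ho1 ho2
    set b : Option ℕ := C1 (v + o) with hbdef
    set d : Option ℕ := C1 (v + o + 1) with hddef
    have hcon : o ∈ WI G i → b = (pR G i).A1 o := by
      intro hmem
      rw [hbdef, (hpat o hmem).1]
    have hrmem : workRule G i o b d ∈ (GG G).P :=
      (mem_PL G).mpr (Or.inr (Or.inr (Or.inr (Or.inr
        ⟨i, o, b, d, ⟨hi, hne⟩, ⟨ho1, ho2⟩, ⟨hC1 _, hcon⟩, Or.inr (hC1 _), rfl⟩))))
    set b2 : Option ℕ := if o ∈ WI G i then (pR G i).A2 o else b with hb2def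
    set D' : Arr := fun z => if z = v + o then some (repB G b2) else F (o + 1) z
      with hD'def
    have hvo1 : v + o + 1 ≠ v + o := by omega
    have hFnext_at : F (o + 1) (v + o) = if o ∈ WI G i then C2 (v + o) else C1 (v + o) := by
      simp only [hFdef]
      rw [if_neg (by omega : ¬ v + o = v + (o + 1))]
      by_cases hmem : o ∈ WI G i
      · rw [if_pos (show v + o - v ∈ WI G i ∧ v + o - v < o + 1 from
          ⟨by simpa using hmem, by omega⟩), if_pos hmem]
      · rw [if_neg (by rintro ⟨h1, _⟩; exact hmem (by simpa using h1)), if_neg hmem]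
    have hb2val : (if o ∈ WI G i then C2 (v + o) else C1 (v + o)) = b2 := by
      rw [hb2def]
      by_cases hmem : o ∈ WI G i
      · rw [if_pos hmem, if_pos hmem, (hpat o hmem).2]
      · rw [if_neg hmem, if_neg hmem]
    have hstep1 : (GG G).step (F o) D' := by
      refine ⟨_, hrmem, v + o, applyAt_pair_intro rfl ?_ ?_ ?_ ?_ ?_⟩
      · simp only [hFdef, workRule, if_pos rfl]
        rw [if_pos ho2]
        simp [hbdef]
      · simp only [hFdef, workRule]
        rw [if_neg hvo1, if_neg (by rintro ⟨_, h2⟩; omega)]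
        simp [hddef]
      · simp only [hD'def, workRule, if_pos rfl]
        simp [hb2def, hbdef]
      · simp only [hD'def, hFdef, workRule]
        rw [if_neg hvo1, if_pos (by omega : v + o + 1 = v + (o + 1))]
        rw [show decC G d = C1 (v + (o + 1)) from by
          rw [hddef, decC_id G (hC1 _)]
          congr 1
          ring]
        rw [show v + (o + 1) = v + o + 1 from by ring]
        simp
      · intro z hz1 hz2
        simp only [hD'def, hFdef, if_neg hz1]
        rw [if_neg (show ¬ z = v + (o + 1) from by omega)]
        by_cases hmem : z - v ∈ WI G i
        · by_cases hlt : z - v < o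
          · rw [if_pos (show z - v ∈ WI G i ∧ z - v < o + 1 from ⟨hmem, by omega⟩),
               if_pos (show z - v ∈ WI G i ∧ z - v < o from ⟨hmem, hlt⟩)]
          · rw [if_neg (show ¬(z - v ∈ WI G i ∧ z - v < o + 1) from by
                rintro ⟨_, h2⟩; omega),
               if_neg (show ¬(z - v ∈ WI G i ∧ z - v < o) from by
                rintro ⟨_, h2⟩; exact hlt h2)]
        · rw [if_neg (by rintro ⟨h1, _⟩; exact hmem h1),
             if_neg (by rintro ⟨h1, _⟩; exact hmem h1)]
    cases hb2v : b2 with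
    | some s =>
      have hEq : D' = F (o + 1) := by
        funext z
        by_cases hz : z = v + o
        · subst hz
          simp only [hD'def, if_pos rfl]
          rw [hFnext_at, hb2val, hb2v, repB]
          rfl
        · simp [hD'def, hz]
      rw [hEq] at hstep1
      exact Relation.ReflTransGen.single hstep1
    | none =>
      have hstep2 : (GG G).step D' (F (o + 1)) := by
        refine ⟨eraseRule G, eraseRule_mem G, v + o, applyAt_single_intro rfl ?_ ?_ ?_⟩
        · simp [hD'def, eraseRule, hb2v, repB]
        · rw [hFnext_at, hb2val, hb2v]
          simp [eraseRule]
        · intro z hz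
          simp [hD'def, hz]
      exact (Relation.ReflTransGen.single hstep1).tail hstep2
  -- Step C : iterate
  have hstepC : ∀ n : ℕ, loI G i + n ≤ hiI G i + 1 →
      (GG G).derives (F (loI G i)) (F (loI G i + n)) := by
    intro n
    induction n with
    | zero =>
      intro _
      rw [show loI G i + ((0:ℕ):ℤ) = loI G i from by push_cast; ring]
      exact Relation.ReflTransGen.refl
    | succ n ih =>
      intro hn
      have hn' : loI G i + (n:ℤ) ≤ hiI G i + 1 := by push_cast at hn ⊢; omega
      refine (ih hn').trans ?_
      rw [show loI G i + ((n + 1 : ℕ):ℤ) = (loI G i + n) + 1 from by push_cast; ring]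
      exact hstepB (loI G i + n) (by push_cast; omega) (by push_cast at hn; omega)
  -- Step D : the final configuration
  have hD : F (hiI G i + 1) = encH G C2 (v + hiI G i + 1) := by
    funext z
    by_cases hz : z = v + hiI G i + 1
    · subst hz
      simp only [hFdef, encH]
      rw [if_pos (by ring : v + hiI G i + 1 = v + (hiI G i + 1)), if_pos trivial]
      rw [if_neg (by omega)]
      have : C1 (v + (hiI G i + 1)) = C2 (v + hiI G i + 1) := by
        rw [show v + (hiI G i + 1) = v + hiI G i + 1 from by ring]
        exact hfr _ (by
          intro hmem
          have := le_hiI G hmem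
          omega)
      rw [this]
    · simp only [hFdef, encH]
      rw [if_neg (by omega : ¬ z = v + (hiI G i + 1)), if_neg hz]
      by_cases hmem : z - v ∈ WI G i
      · rw [if_pos ⟨hmem, by have := le_hiI G hmem; omega⟩]
      · rw [if_neg (by rintro ⟨h1, _⟩; exact hmem h1)]
        exact hfr z hmem
  have := hstepC (hiI G i + 1 - loI G i).toNat
    (by rw [Int.toNat_of_nonneg (by omega)]; omega)
  rw [Int.toNat_of_nonneg (by omega : (0:ℤ) ≤ hiI G i + 1 - loI G i)] at this
  rw [show loI G i + (hiI G i + 1 - loI G i) = hiI G i + 1 from by ring] at this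
  rw [hD] at this
  exact (Relation.ReflTransGen.single hstepA).trans this

/-! #### Completeness -/

lemma axG'_eq_encH : axG' G = encH G G.ax 0 := rfl

lemma complete_derives {C : Arr} (h : G.derives G.ax C) :
    ∀ x : ℤ, (GG G).derives (axG' G) (encH G C x) := by
  induction h with
  | refl =>
    intro x
    rw [axG'_eq_encH]
    exact encH_move G (okArr_ax G) 0 x
  | @tail B C hab hstep ih =>
    intro x
    obtain ⟨p, hp, u, happ⟩ := hstep
    obtain ⟨j, hj, hget⟩ := List.mem_iff_getElem.mp hp
    have hpj : pR G j = p := by rw [pR, List.getD_eq_getElem _ _ hj, hget]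
    have hOkB : OkArr G B := okArr_derives G hab
    by_cases hne : (WI G j).Nonempty
    · have happ' : (pR G j).applyAt u B C := by rw [hpj]; exact happ
      have h1 := ih (u + loI G j)
      have h2 := sim_rule G hj hne happ' hOkB
      have hOkC : OkArr G C := okArr_applyAt G hj happ' hOkB
      exact (h1.trans h2).trans (encH_move G hOkC _ x)
    · have hW : (pR G j).W = ∅ := by
        rw [Finset.not_nonempty_iff_eq_empty] at hne
        exact hne
      have hBC : B = C := by
        funext z
        refine happ.1 z ?_
        rw [← hpj, hW]
        exact Finset.notMem_empty _
      rw [← hBC]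
      exact ih x

lemma complete_terminal {C : Arr} (h : G.derives G.ax C) :
    (GG G).derives (axG' G) C := by
  have hOk : OkArr G C := okArr_derives G h
  refine (complete_derives G h 0).tail ?_
  refine ⟨exitRule G (C 0), exitRule_mem G (hOk 0), 0, applyAt_single_intro rfl ?_ ?_ ?_⟩
  · simp [encH, exitRule]
  · simp [exitRule]
  · intro z hz
    simp [encH, hz]

/-! #### The language equality -/

lemma GG_Lstar : (GG G).Lstar = G.Lstar := by
  ext B
  simp only [Grammar.Lstar, Set.mem_setOf_eq]
  constructor
  · rintro ⟨A, hder, hov, heq⟩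
    exact ⟨A, soundness G hder hov, hov, heq⟩
  · rintro ⟨A, hder, hov, heq⟩
    exact ⟨A, complete_terminal G hder, hov, heq⟩


end CNF

/-- Every one-dimensional array language in `L_*(1-ARBA)` is generated
by a one-dimensional array grammar all of whose rules are of the normal forms
`A → B` (`A ∈ N`, `B ∈ N ∪ T ∪ {#}`) or `A v D → B v C` (`v ∈ {1, -1}`,
`A, B, C ∈ N ∪ T`, `D ∈ N ∪ T ∪ {#}`). -/
theorem ARBA_chomsky_normal_form (G : Grammar) :
    ∃ G' : Grammar, G'.T = G.T ∧ (∀ p ∈ G'.P, NormalFormRule G' p) ∧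
      G'.Lstar = G.Lstar := by
  exact ⟨GG G, rfl, PL_normal G, GG_Lstar G⟩

end AID
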